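/- Subadditivity of the isoperimetric profile against the profile at infinity: Let (X, d, μ) be a noncompact metric measure space satisfying the cut property, and assume the isoperimetric profile I_X is lower semicontinuous on (0, μ(X)). Then for every V ∈ (0, μ(X)) and all V_1, V_2 ≥ 0 with V_1 + V_2 = V one has I_X(V) ≤ I_X(V_1) + I^∞_X(V_2) (with the conventions I_X(0) := 0 and I^∞_X(0) := 0). -/

import Mathlib

open Filter MeasureTheory Metric Set Topology
open scoped ENNReal NNReal

noncomputable section

variable {X : Type*} [MetricSpace X] [MeasurableSpace X]

/-- `u` is locally Lipschitz on the set `A`. -/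
def LocLipschitzOn (u : X → ℝ) (A : Set X) : Prop :=
  ∀ x ∈ A, ∃ K : NNReal, ∃ t ∈ 𝓝[A] x, LipschitzOnWith K u t

/-- The slope `lip u (x)` of `u` at `x` (equal to `0` at isolated points). -/
def lipSlope (u : X → ℝ) (x : X) : ℝ≥0∞ :=
  Filter.limsup (fun y => ENNReal.ofReal (|u y - u x| / dist y x)) (𝓝[≠] x)

/-- Convergence `u i → f` in `L¹(B, μ)`. -/
def TendstoL1On (μ : Measure X) (B : Set X) (u : ℕ → X → ℝ) (f : X → ℝ) : Prop :=
  Tendsto (fun i => ∫⁻ x in B, ENNReal.ofReal |u i x - f x| ∂μ) atTop (𝓝 0)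

/-- Convergence `u i → f` in `L¹_loc(A, μ)`, i.e. in `L¹(K, μ)` for every compact `K ⊆ A`. -/
def TendstoL1LocOn (μ : Measure X) (A : Set X) (u : ℕ → X → ℝ) (f : X → ℝ) : Prop :=
  ∀ K : Set X, K ⊆ A → IsCompact K → TendstoL1On μ K u f

/-- The relative perimeter `P(E, A)` of a Borel set `E` in an open set `A`. -/
def perim (μ : Measure X) (E A : Set X) : ℝ≥0∞ :=
  ⨅ (u : ℕ → X → ℝ) (_ : ∀ i, LocLipschitzOn (u i) A)
    (_ : TendstoL1LocOn μ A u (E.indicator 1)),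
    Filter.liminf (fun i => ∫⁻ x in A, lipSlope (u i) x ∂μ) atTop

/-- The perimeter `P(E) := P(E, X)`. -/
def Perim (μ : Measure X) (E : Set X) : ℝ≥0∞ := perim μ E Set.univ

/-- The isoperimetric profile `I_X`. -/
def isoProfile (μ : Measure X) (V : ℝ) : ℝ≥0∞ :=
  ⨅ (E : Set X) (_ : MeasurableSet E) (_ : μ E = ENNReal.ofReal V), Perim μ E

/-- The measure is finite on bounded sets. -/
def FiniteOnBounded (μ : Measure X) : Prop :=
  ∀ s : Set X, Bornology.IsBounded s → μ s < ⊤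

/-- The support of the measure is the whole space. -/
def FullSupport (μ : Measure X) : Prop :=
  ∀ (x : X) (r : ℝ), 0 < r → 0 < μ (ball x r)

/-- (H1) BV compactness. -/
def BVCompactness (μ : Measure X) : Prop :=
  ∀ E : ℕ → Set X, (∀ i, MeasurableSet (E i)) →
    (∃ M : ℝ≥0∞, M ≠ ⊤ ∧ ∀ i, μ (E i) + Perim μ (E i) ≤ M) →
    ∃ φ : ℕ → ℕ, StrictMono φ ∧ ∃ F : Set X, MeasurableSet F ∧
      ∀ (x : X) (r : ℝ), 0 < r →
        TendstoL1On μ (ball x r) (fun k => (E (φ k)).indicator 1) (F.indicator 1)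

/-- (H2) Cut property. -/
def CutProperty (μ : Measure X) : Prop :=
  ∀ E : Set X, MeasurableSet E → Perim μ E ≠ ⊤ → ∀ o : X,
    ∀ᵐ r ∂(volume.restrict (Set.Ioi (0:ℝ))),
      Perim μ (E ∩ ball o r) ≤ perim μ E (ball o r) +
          ENNReal.ofReal (deriv (fun s => (μ (E ∩ ball o s)).toReal) r) ∧
      Perim μ (E \ ball o r) ≤ perim μ E (closure (ball o r))ᶜ +
          ENNReal.ofReal (deriv (fun s => (μ (E ∩ ball o s)).toReal) r)

/-- (H3) The perimeter of balls of radius `r` vanishes uniformly as `r → 0⁺`. -/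
def SmallBallPerimeter (μ : Measure X) : Prop :=
  Tendsto (fun r : ℝ => ⨆ x : X, Perim μ (ball x r)) (𝓝[>] 0) (𝓝 0)

/-- (H4) Continuity of the volume of balls. -/
def BallVolContinuous (μ : Measure X) : Prop :=
  ∀ x : X, ContinuousOn (fun r : ℝ => (μ (ball x r)).toReal) (Set.Ioi (0:ℝ))

/-- (H5) `μ` is uniformly locally doubling. -/
def UnifLocDoubling (μ : Measure X) : Prop :=
  ∀ R : ℝ, 0 < R → ∃ C : ℝ≥0∞, C ≠ ⊤ ∧
    ∀ (x : X) (r : ℝ), 0 < r → r ≤ R → μ (ball x (2*r)) ≤ C * μ (ball x r)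

/-- The isoperimetric profile at infinity `I^∞_X`. -/
def isoProfileAtInfty (μ : Measure X) (V : ℝ) : ℝ≥0∞ :=
  ⨅ (E : ℕ → Set X) (_ : ∀ i, MeasurableSet (E i))
    (_ : Tendsto (fun i => μ (E i)) atTop (𝓝 (ENNReal.ofReal V)))
    (_ : ∀ (x : X) (r : ℝ), 0 < r → ∀ᶠ i in atTop, E i ∩ ball x r = ∅),
    Filter.liminf (fun i => Perim μ (E i)) atTop

/-- The isoperimetric profile at infinity volumewise `Ĩ^∞_X`. -/
def isoProfileAtInftyVol (μ : Measure X) (V : ℝ) : ℝ≥0∞ :=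
  ⨅ (E : ℕ → Set X) (_ : ∀ i, MeasurableSet (E i))
    (_ : Tendsto (fun i => μ (E i)) atTop (𝓝 (ENNReal.ofReal V)))
    (_ : ∀ (x : X) (r : ℝ), 0 < r →
      Tendsto (fun i => μ (E i ∩ ball x r)) atTop (𝓝 0)),
    Filter.liminf (fun i => Perim μ (E i)) atTop

/-- The open interval `(0, μ(X))` of admissible volumes. -/
def profileDomain (μ : Measure X) : Set ℝ :=
  {V : ℝ | 0 < V ∧ ENNReal.ofReal V < μ Set.univ}



/-! ### Auxiliary lemmas -/

section Aux

/-- In `ℝ≥0∞`, `limsup` is subadditive over any filter. -/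
lemma aux_limsup_add_le {β : Type*} (l : Filter β) (f g : β → ℝ≥0∞) :
    Filter.limsup (fun y => f y + g y) l ≤ Filter.limsup f l + Filter.limsup g l := by
  rcases eq_or_ne (Filter.limsup f l) ⊤ with hA | hA
  · rw [hA, top_add]; exact le_top
  rcases eq_or_ne (Filter.limsup g l) ⊤ with hB | hB
  · rw [hB, add_top]; exact le_top
  refine ENNReal.le_of_forall_pos_le_add fun ε hε _ => ?_
  have hε2 : ((ε : ℝ≥0∞) / 2) ≠ 0 := by
    simp [ENNReal.div_eq_zero_iff, hε.ne']
  have h1 : ∀ᶠ y in l, f y < Filter.limsup f l + (ε : ℝ≥0∞) / 2 :=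
    Filter.eventually_lt_of_limsup_lt (ENNReal.lt_add_right hA hε2)
  have h2 : ∀ᶠ y in l, g y < Filter.limsup g l + (ε : ℝ≥0∞) / 2 :=
    Filter.eventually_lt_of_limsup_lt (ENNReal.lt_add_right hB hε2)
  refine Filter.limsup_le_of_le (by isBoundedDefault) ?_
  filter_upwards [h1, h2] with y hy1 hy2
  calc f y + g y ≤ (Filter.limsup f l + (ε : ℝ≥0∞) / 2) +
        (Filter.limsup g l + (ε : ℝ≥0∞) / 2) := add_le_add hy1.le hy2.le
    _ = Filter.limsup f l + Filter.limsup g l + ((ε : ℝ≥0∞) / 2 + (ε : ℝ≥0∞) / 2) := by ring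
    _ = Filter.limsup f l + Filter.limsup g l + (ε : ℝ≥0∞) := by rw [ENNReal.add_halves]

/-- The slope is subadditive. -/
lemma aux_lipSlope_add_le (u v : X → ℝ) (x : X) :
    lipSlope (fun y => u y + v y) x ≤ lipSlope u x + lipSlope v x := by
  refine le_trans (Filter.limsup_le_limsup (Filter.Eventually.of_forall fun y => ?_))
    (aux_limsup_add_le _ _ _)
  show ENNReal.ofReal (|(u y + v y) - (u x + v x)| / dist y x)
      ≤ ENNReal.ofReal (|u y - u x| / dist y x) + ENNReal.ofReal (|v y - v x| / dist y x)
  rw [← ENNReal.ofReal_add (by positivity) (by positivity)]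
  apply ENNReal.ofReal_le_ofReal
  rw [← add_div]
  rcases eq_or_lt_of_le (dist_nonneg (x := y) (y := x)) with hd | hd
  · simp [← hd]
  · have hnum : |(u y + v y) - (u x + v x)| ≤ |u y - u x| + |v y - v x| := by
      have h : (u y + v y) - (u x + v x) = (u y - u x) + (v y - v x) := by ring
      rw [h]; exact abs_add_le _ _
    gcongr

/-- The slope of a continuous function is Borel measurable. -/
lemma aux_measurable_lipSlope [BorelSpace X] {u : X → ℝ} (hu : Continuous u) :
    Measurable (lipSlope u) := by
  have hrepr : ∀ x : X, lipSlope u x =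
      ⨅ n : ℕ, ⨆ y : X, ⨆ _ : y ∈ ball x (1 / ((n : ℝ) + 1)) ∩ {x}ᶜ,
        ENNReal.ofReal (|u y - u x| / dist y x) := by
    intro x
    have hb : (𝓝[≠] x).HasBasis (fun _ : ℕ => True)
        (fun n : ℕ => ball x (1 / ((n : ℝ) + 1)) ∩ {x}ᶜ) :=
      nhdsWithin_hasBasis nhds_basis_ball_inv_nat_succ _
    rw [lipSlope, hb.limsup_eq_iInf_iSup]
    simp only [iInf_true]
  have hmeas : ∀ n : ℕ, Measurable (fun x : X =>
      ⨆ y : X, ⨆ _ : y ∈ ball x (1 / ((n : ℝ) + 1)) ∩ {x}ᶜ,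
        ENNReal.ofReal (|u y - u x| / dist y x)) := by
    intro n
    apply LowerSemicontinuous.measurable
    apply lowerSemicontinuous_iSup
    intro y x₀ c hc
    have hc' : c < ⨆ _ : y ∈ ball x₀ (1 / ((n : ℝ) + 1)) ∩ {x₀}ᶜ,
        ENNReal.ofReal (|u y - u x₀| / dist y x₀) := hc
    by_cases hcond : y ∈ ball x₀ (1 / ((n : ℝ) + 1)) ∩ {x₀}ᶜ
    · rw [iSup_pos hcond] at hc'
      have hyx : y ≠ x₀ := hcond.2
      have hdist : dist y x₀ ≠ 0 := by
        simpa [dist_eq_zero] using hyx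
      have hcont : ContinuousAt (fun x : X => ENNReal.ofReal (|u y - u x| / dist y x)) x₀ := by
        apply ENNReal.continuous_ofReal.continuousAt.comp
        exact ContinuousAt.div ((continuous_const.sub hu).abs.continuousAt)
          ((continuous_const.dist continuous_id).continuousAt) hdist
      have hval : ∀ᶠ x in 𝓝 x₀,
          ENNReal.ofReal (|u y - u x| / dist y x) ∈ Ioi c :=
        hcont.eventually (isOpen_Ioi.eventually_mem hc')
      have hU : ∀ᶠ x in 𝓝 x₀, y ∈ ball x (1 / ((n : ℝ) + 1)) ∩ {x}ᶜ := by
        have h1 : ∀ᶠ x in 𝓝 x₀, dist y x < 1 / ((n : ℝ) + 1) := by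
          have hcd : ContinuousAt (fun x : X => dist y x) x₀ :=
            (continuous_const.dist continuous_id).continuousAt
          exact hcd.eventually (isOpen_Iio.eventually_mem
            (by simpa [mem_ball] using hcond.1))
        have h2 : ∀ᶠ x in 𝓝 x₀, x ∈ ({y}ᶜ : Set X) :=
          isOpen_compl_singleton.eventually_mem (by simpa [eq_comm] using hyx)
        filter_upwards [h1, h2] with x hx1 hx2
        exact ⟨mem_ball.2 hx1, by simpa [eq_comm] using hx2⟩
      filter_upwards [hU, hval] with x hx hvx
      show c < ⨆ _ : y ∈ ball x (1 / ((n : ℝ) + 1)) ∩ {x}ᶜ,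
        ENNReal.ofReal (|u y - u x| / dist y x)
      rw [iSup_pos hx]
      exact hvx
    · rw [iSup_neg hcond] at hc'
      exact absurd hc' (not_lt_bot)
  have : lipSlope u = fun x => ⨅ n : ℕ, ⨆ y : X,
      ⨆ _ : y ∈ ball x (1 / ((n : ℝ) + 1)) ∩ {x}ᶜ,
        ENNReal.ofReal (|u y - u x| / dist y x) := funext hrepr
  rw [this]
  exact Measurable.iInf hmeas

/-- Every `ℝ≥0∞`-valued sequence has a subsequence converging to its `liminf`. -/
lemma aux_exists_subseq_tendsto_liminf (f : ℕ → ℝ≥0∞) :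
    ∃ φ : ℕ → ℕ, StrictMono φ ∧
      Tendsto (fun n => f (φ n)) atTop (𝓝 (Filter.liminf f atTop)) := by
  set L := Filter.liminf f atTop with hL
  rcases eq_or_ne L ⊤ with hLtop | hLtop
  · refine ⟨id, strictMono_id, ?_⟩
    rw [hLtop]
    refine ENNReal.tendsto_nhds_top fun k => ?_
    have : (k : ℝ≥0∞) < L := hLtop ▸ ENNReal.natCast_lt_top k
    simpa using Filter.eventually_lt_of_lt_liminf this
  · have hfreq : ∀ n : ℕ, ∃ᶠ k in atTop, f k < L + ((n : ℝ≥0∞) + 1)⁻¹ := by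
      intro n
      exact Filter.frequently_lt_of_liminf_lt (by isBoundedDefault)
        (by rw [← hL]; exact ENNReal.lt_add_right hLtop (by simp))
    obtain ⟨φ, hφ, hP⟩ := Filter.extraction_forall_of_frequently hfreq
    refine ⟨φ, hφ, ?_⟩
    refine tendsto_order.2 ⟨fun a ha => ?_, fun b hb => ?_⟩
    · exact hφ.tendsto_atTop.eventually (Filter.eventually_lt_of_lt_liminf ha)
    · have hbL : b - L ≠ 0 := by
        rw [Ne, tsub_eq_zero_iff_le]
        exact hb.not_ge
      obtain ⟨n, hn⟩ := ENNReal.exists_inv_nat_lt hbL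
      have hle : L + ((n : ℝ≥0∞) + 1)⁻¹ < b := by
        have h1 : ((n : ℝ≥0∞) + 1)⁻¹ ≤ ((n : ℝ≥0∞))⁻¹ :=
          ENNReal.inv_le_inv.2 le_self_add
        calc L + ((n : ℝ≥0∞) + 1)⁻¹ ≤ L + ((n : ℝ≥0∞))⁻¹ := add_le_add_right h1 _
          _ < L + (b - L) := ENNReal.add_lt_add_left hLtop hn
          _ = b := by rw [add_comm, tsub_add_cancel_of_le hb.le]
      rw [Filter.eventually_atTop]
      refine ⟨n, fun k hk => ?_⟩
      have h2 : ((k : ℝ≥0∞) + 1)⁻¹ ≤ ((n : ℝ≥0∞) + 1)⁻¹ := by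
        apply ENNReal.inv_le_inv.2
        exact_mod_cast add_le_add_left (by exact_mod_cast hk) 1
      exact lt_of_lt_of_le (hP k) (le_of_lt (lt_of_le_of_lt (add_le_add_right h2 L) hle))

/-- A function locally Lipschitz on `univ` is continuous. -/
lemma aux_locLip_continuous {u : X → ℝ} (h : LocLipschitzOn u Set.univ) : Continuous u := by
  rw [continuous_iff_continuousAt]
  intro x
  obtain ⟨K, t, ht, hK⟩ := h x (mem_univ x)
  rw [nhdsWithin_univ] at ht
  exact hK.continuousOn.continuousAt ht

/-- Relative perimeter in any set is at most the full perimeter. -/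
lemma aux_perim_le_Perim (μ : Measure X) (E A : Set X) : perim μ E A ≤ Perim μ E := by
  rw [Perim]
  refine le_iInf fun u => le_iInf fun hu => le_iInf fun huL => ?_
  rw [perim]
  have hu' : ∀ i, LocLipschitzOn (u i) A := by
    intro i x hx
    obtain ⟨K, t, ht, hK⟩ := hu i x (mem_univ x)
    rw [nhdsWithin_univ] at ht
    exact ⟨K, t, nhdsWithin_le_nhds ht, hK⟩
  have huL' : TendstoL1LocOn μ A u (E.indicator 1) :=
    fun K hK hKc => huL K (subset_univ K) hKc
  refine iInf_le_of_le u (iInf_le_of_le hu' (iInf_le_of_le huL' ?_))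
  refine Filter.liminf_le_liminf (Filter.Eventually.of_forall fun i => ?_)
  exact lintegral_mono_set (subset_univ A)

/-- Subadditivity of the perimeter for disjoint measurable sets. -/
lemma aux_Perim_union_le [BorelSpace X] (μ : Measure X) {E F : Set X}
    (hE : MeasurableSet E) (hF : MeasurableSet F) (hd : Disjoint E F) :
    Perim μ (E ∪ F) ≤ Perim μ E + Perim μ F := by
  rcases eq_or_ne (Perim μ E) ⊤ with hPE | hPE
  · rw [hPE, top_add]; exact le_top
  rcases eq_or_ne (Perim μ F) ⊤ with hPF | hPF
  · rw [hPF, add_top]; exact le_top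
  refine ENNReal.le_of_forall_pos_le_add fun ε hε _ => ?_
  set half : ℝ≥0∞ := (ε : ℝ≥0∞) / 2 with hhalf
  have hhalf0 : half ≠ 0 := by
    simp [hhalf, ENNReal.div_eq_zero_iff, hε.ne']
  -- extract near-optimal recovery sequences
  set cE := Perim μ E + half with hcE
  have h1 : Perim μ E < cE := ENNReal.lt_add_right hPE hhalf0
  rw [Perim, perim, iInf_lt_iff] at h1
  obtain ⟨u, h1⟩ := h1
  rw [iInf_lt_iff] at h1
  obtain ⟨hu, h1⟩ := h1
  rw [iInf_lt_iff] at h1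
  obtain ⟨huL, hulim⟩ := h1
  set cF := Perim μ F + half with hcF
  have h2 : Perim μ F < cF := ENNReal.lt_add_right hPF hhalf0
  rw [Perim, perim, iInf_lt_iff] at h2
  obtain ⟨v, h2⟩ := h2
  rw [iInf_lt_iff] at h2
  obtain ⟨hv, h2⟩ := h2
  rw [iInf_lt_iff] at h2
  obtain ⟨hvL, hvlim⟩ := h2
  -- pass to subsequences along which the energies converge to the liminfs
  obtain ⟨φ, hφm, hφt⟩ := aux_exists_subseq_tendsto_liminf
    (fun i => ∫⁻ x in Set.univ, lipSlope (u i) x ∂μ)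
  obtain ⟨ψ, hψm, hψt⟩ := aux_exists_subseq_tendsto_liminf
    (fun i => ∫⁻ x in Set.univ, lipSlope (v i) x ∂μ)
  set w : ℕ → X → ℝ := fun i x => u (φ i) x + v (ψ i) x with hw
  have hcontu : ∀ i, Continuous (u i) := fun i => aux_locLip_continuous (hu i)
  have hcontv : ∀ i, Continuous (v i) := fun i => aux_locLip_continuous (hv i)
  -- w is locally Lipschitz
  have hwlip : ∀ i, LocLipschitzOn (w i) Set.univ := by
    intro i x hx
    obtain ⟨K1, t1, ht1, hK1⟩ := hu (φ i) x hx
    obtain ⟨K2, t2, ht2, hK2⟩ := hv (ψ i) x hx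
    refine ⟨K1 + K2, t1 ∩ t2, Filter.inter_mem ht1 ht2, ?_⟩
    rw [lipschitzOnWith_iff_dist_le_mul]
    intro p hp q hq
    have d1 := lipschitzOnWith_iff_dist_le_mul.1 (hK1.mono inter_subset_left) p hp q hq
    have d2 := lipschitzOnWith_iff_dist_le_mul.1 (hK2.mono inter_subset_right) p hp q hq
    have habs : dist (w i p) (w i q) ≤ dist (u (φ i) p) (u (φ i) q)
        + dist (v (ψ i) p) (v (ψ i) q) := by
      simp only [hw, Real.dist_eq]
      have h : u (φ i) p + v (ψ i) p - (u (φ i) q + v (ψ i) q)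
          = (u (φ i) p - u (φ i) q) + (v (ψ i) p - v (ψ i) q) := by ring
      rw [h]
      exact abs_add_le _ _
    have : ((K1 + K2 : ℝ≥0) : ℝ) = (K1 : ℝ) + (K2 : ℝ) := by push_cast; ring
    rw [this, add_mul]
    exact habs.trans (add_le_add d1 d2)
  -- w converges in L¹loc to the indicator of the union
  have hwL1 : TendstoL1LocOn μ Set.univ w ((E ∪ F).indicator 1) := by
    intro K hK hKc
    have hmeas1 : ∀ j, Measurable fun x =>
        ENNReal.ofReal |u j x - E.indicator 1 x| :=
      fun j => (((hcontu j).measurable.sub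
        (measurable_one.indicator hE)).abs).ennreal_ofReal
    have key : ∀ i, (∫⁻ x in K, ENNReal.ofReal |w i x - (E ∪ F).indicator 1 x| ∂μ)
        ≤ (∫⁻ x in K, ENNReal.ofReal |u (φ i) x - E.indicator 1 x| ∂μ)
          + ∫⁻ x in K, ENNReal.ofReal |v (ψ i) x - F.indicator 1 x| ∂μ := by
      intro i
      rw [← lintegral_add_left (hmeas1 (φ i))]
      refine lintegral_mono fun x => ?_
      rw [← ENNReal.ofReal_add (abs_nonneg _) (abs_nonneg _)]
      apply ENNReal.ofReal_le_ofReal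
      rw [Set.indicator_union_of_disjoint hd]
      have h : w i x - (E.indicator 1 x + F.indicator 1 x)
          = (u (φ i) x - E.indicator 1 x) + (v (ψ i) x - F.indicator 1 x) := by
        simp only [hw]; ring
      simp only [Pi.add_apply]
      rw [h]
      exact abs_add_le _ _
    have hsum : Tendsto (fun i =>
        (∫⁻ x in K, ENNReal.ofReal |u (φ i) x - E.indicator 1 x| ∂μ)
          + ∫⁻ x in K, ENNReal.ofReal |v (ψ i) x - F.indicator 1 x| ∂μ)
        atTop (𝓝 0) := by
      have ha := (huL K (subset_univ K) hKc).comp hφm.tendsto_atTop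
      have hb := (hvL K (subset_univ K) hKc).comp hψm.tendsto_atTop
      simpa using ha.add hb
    exact tendsto_of_tendsto_of_tendsto_of_le_of_le tendsto_const_nhds hsum
      (fun i => zero_le) key
  -- conclude
  have hmain : Perim μ (E ∪ F) ≤
      Filter.liminf (fun i => ∫⁻ x in Set.univ, lipSlope (w i) x ∂μ) atTop := by
    rw [Perim, perim]
    exact iInf_le_of_le w (iInf_le_of_le hwlip (iInf_le_of_le hwL1 le_rfl))
  have hstep : ∀ i, (∫⁻ x in Set.univ, lipSlope (w i) x ∂μ)
      ≤ (∫⁻ x in Set.univ, lipSlope (u (φ i)) x ∂μ)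
        + ∫⁻ x in Set.univ, lipSlope (v (ψ i)) x ∂μ := by
    intro i
    rw [← lintegral_add_left (aux_measurable_lipSlope (hcontu (φ i)))]
    refine lintegral_mono fun x => ?_
    exact aux_lipSlope_add_le (u (φ i)) (v (ψ i)) x
  have hlim2 : Filter.liminf (fun i => ∫⁻ x in Set.univ, lipSlope (w i) x ∂μ) atTop
      ≤ Filter.liminf (fun i => ∫⁻ x in Set.univ, lipSlope (u i) x ∂μ) atTop
        + Filter.liminf (fun i => ∫⁻ x in Set.univ, lipSlope (v i) x ∂μ) atTop := by
    refine le_trans (Filter.liminf_le_liminf (Filter.Eventually.of_forall hstep)) ?_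
    have ht := hφt.add hψt
    rw [ht.liminf_eq]
  have hfinal : Perim μ (E ∪ F) ≤ cE + cF :=
    hmain.trans (hlim2.trans (add_le_add hulim.le hvlim.le))
  calc Perim μ (E ∪ F) ≤ cE + cF := hfinal
    _ = Perim μ E + Perim μ F + (half + half) := by rw [hcE, hcF]; ring
    _ = Perim μ E + Perim μ F + (ε : ℝ≥0∞) := by rw [hhalf, ENNReal.add_halves]

/-- Selection of arbitrarily large radii where the derivative of a bounded monotone
function is small, inside a set of full measure. -/
lemma aux_exists_good_radius {m : ℝ → ℝ} (hm : Monotone m) {C : ℝ}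
    (hC : ∀ r, m r ≤ C) (h0 : ∀ r, 0 ≤ m r) {S : Set ℝ}
    (hS : ∀ᵐ r ∂(volume.restrict (Set.Ioi (0 : ℝ))), r ∈ S) {ε : ℝ} (hε : 0 < ε) (n : ℕ) :
    ∃ r : ℝ, (n : ℝ) < r ∧ r ∈ S ∧ deriv m r ≤ ε := by
  by_contra hcon
  push_neg at hcon
  set T : ℝ := (n : ℝ) + (C / ε + 1) with hT
  set ν := hm.stieltjesFunction.measure with hν
  set ρ := volume.restrict (Set.Ioc (n : ℝ) T) with hρ
  have hC0 : 0 ≤ C := le_trans (h0 0) (hC 0)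
  have hIoc : Set.Ioc (n : ℝ) T ⊆ Set.Ioi (0 : ℝ) := fun r hr =>
    lt_of_le_of_lt (Nat.cast_nonneg n) hr.1
  -- the integral of the derivative is bounded by `C`
  have hae2 : ∀ᵐ r ∂ρ, ENNReal.ofReal (deriv m r) = ν.rnDeriv volume r := by
    apply ae_restrict_of_ae
    filter_upwards [hm.ae_hasDerivAt, Measure.rnDeriv_lt_top ν volume] with r h1 h2
    rw [h1.deriv, ENNReal.ofReal_toReal h2.ne]
  have hint : (∫⁻ r, ENNReal.ofReal (deriv m r) ∂ρ) ≤ ENNReal.ofReal C := by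
    calc (∫⁻ r, ENNReal.ofReal (deriv m r) ∂ρ)
        = ∫⁻ r, ν.rnDeriv volume r ∂ρ := lintegral_congr_ae hae2
      _ = ∫⁻ r in Set.Ioc (n : ℝ) T, ν.rnDeriv volume r ∂volume := rfl
      _ ≤ ν (Set.Ioc (n : ℝ) T) := Measure.setLIntegral_rnDeriv_le _
      _ = ENNReal.ofReal (hm.stieltjesFunction T - hm.stieltjesFunction (n : ℝ)) :=
          StieltjesFunction.measure_Ioc _ _ _
      _ ≤ ENNReal.ofReal C := by
          apply ENNReal.ofReal_le_ofReal
          have hgT : hm.stieltjesFunction T ≤ C := by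
            rw [hm.stieltjesFunction_eq]
            exact le_trans (hm.rightLim_le (lt_add_one T)) (hC _)
          have hgn : 0 ≤ hm.stieltjesFunction (n : ℝ) := by
            rw [hm.stieltjesFunction_eq]
            exact le_trans (h0 _) (hm.le_rightLim le_rfl)
          linarith
  -- Chebyshev
  have hcheb : ρ {r : ℝ | ε < deriv m r} ≤ ENNReal.ofReal (C / ε) := by
    have hsub : {r : ℝ | ε < deriv m r} ⊆
        {r : ℝ | ENNReal.ofReal ε ≤ ENNReal.ofReal (deriv m r)} :=
      fun r hr => ENNReal.ofReal_le_ofReal (le_of_lt hr)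
    refine le_trans (measure_mono hsub) ?_
    have hmeasD : AEMeasurable (fun r : ℝ => ENNReal.ofReal (deriv m r)) ρ :=
      ((measurable_deriv m).ennreal_ofReal).aemeasurable
    refine le_trans (meas_ge_le_lintegral_div hmeasD
      (by simpa using hε) ENNReal.ofReal_ne_top) ?_
    rw [ENNReal.ofReal_div_of_pos hε]
    exact ENNReal.div_le_div_right hint _
  -- the bad sets cover `Ioc n T`
  have hScov : ρ {r : ℝ | r ∉ S} = 0 := by
    have : ∀ᵐ r ∂ρ, r ∈ S := ae_restrict_of_ae_restrict_of_subset hIoc hS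
    exact this
  have hcover : Set.Ioc (n : ℝ) T ⊆ {r : ℝ | r ∉ S} ∪ {r : ℝ | ε < deriv m r} := by
    intro r hr
    rcases Classical.em (r ∈ S) with hrS | hrS
    · exact Or.inr (hcon r hr.1 hrS)
    · exact Or.inl hrS
  have hρIoc : ρ (Set.Ioc (n : ℝ) T) = ENNReal.ofReal (C / ε + 1) := by
    rw [hρ, Measure.restrict_apply measurableSet_Ioc, Set.inter_self, Real.volume_Ioc]
    congr 1
    rw [hT]; ring
  have hfin : ENNReal.ofReal (C / ε + 1) ≤ ENNReal.ofReal (C / ε) := by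
    calc ENNReal.ofReal (C / ε + 1) = ρ (Set.Ioc (n : ℝ) T) := hρIoc.symm
      _ ≤ ρ ({r : ℝ | r ∉ S} ∪ {r : ℝ | ε < deriv m r}) := measure_mono hcover
      _ ≤ ρ {r : ℝ | r ∉ S} + ρ {r : ℝ | ε < deriv m r} := measure_union_le _ _
      _ = ρ {r : ℝ | ε < deriv m r} := by rw [hScov, zero_add]
      _ ≤ ENNReal.ofReal (C / ε) := hcheb
  have : ENNReal.ofReal (C / ε) < ENNReal.ofReal (C / ε + 1) :=
    (ENNReal.ofReal_lt_ofReal_iff (by positivity)).2 (lt_add_one _)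
  exact absurd hfin this.not_ge

/-- Lower semicontinuity along sequences. -/
lemma aux_lsc_liminf {μ : Measure X}
    (hlsc : LowerSemicontinuousOn (fun V : ℝ => isoProfile μ V) (profileDomain μ))
    {x : ℝ} (hx : x ∈ profileDomain μ) {y : ℕ → ℝ}
    (hy : ∀ᶠ i in atTop, y i ∈ profileDomain μ) (ht : Tendsto y atTop (𝓝 x)) :
    isoProfile μ x ≤ Filter.liminf (fun i => isoProfile μ (y i)) atTop := by
  by_contra hcontra
  push_neg at hcontra
  obtain ⟨c, hc1, hc2⟩ := exists_between hcontra
  have htd : Tendsto y atTop (𝓝[profileDomain μ] x) :=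
    tendsto_nhdsWithin_iff.2 ⟨ht, hy⟩
  have hev : ∀ᶠ i in atTop, c < isoProfile μ (y i) :=
    htd.eventually (hlsc x hx c hc2)
  have : c ≤ Filter.liminf (fun i => isoProfile μ (y i)) atTop :=
    Filter.le_liminf_of_le (by isBoundedDefault)
      (hev.mono fun i hi => hi.le)
  exact absurd this hc1.not_ge

end Aux

/-- **Subadditivity of the isoperimetric profile against the profile at infinity.**
Let `(X, d, μ)` be a noncompact metric measure space satisfying the cut property, and
assume the isoperimetric profile `I_X` is lower semicontinuous on `(0, μ(X))`. Then for
every `V ∈ (0, μ(X))` and all `V₁, V₂ ≥ 0` with `V₁ + V₂ = V` one has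
`I_X(V) ≤ I_X(V₁) + I^∞_X(V₂)` (with the conventions `I_X(0) := 0` and `I^∞_X(0) := 0`,
which hold for the definitions used here since the empty set has zero measure and zero
perimeter). -/
theorem isoProfile_subadditive_at_infinity
    {X : Type*} [MetricSpace X] [MeasurableSpace X] [BorelSpace X]
    [LocallyCompactSpace X] [TopologicalSpace.SeparableSpace X] [NoncompactSpace X]
    (μ : Measure X) (hfin : FiniteOnBounded μ) (hsupp : FullSupport μ)
    (hcut : CutProperty μ)
    (hlsc : LowerSemicontinuousOn (fun V : ℝ => isoProfile μ V) (profileDomain μ))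
    (V : ℝ) (hV : V ∈ profileDomain μ)
    (V₁ V₂ : ℝ) (hV₁ : 0 ≤ V₁) (hV₂ : 0 ≤ V₂) (hsum : V₁ + V₂ = V) :
    isoProfile μ V ≤ isoProfile μ V₁ + isoProfileAtInfty μ V₂ := by
  -- trivial case `V₂ = 0`
  rcases eq_or_lt_of_le hV₂ with hV₂0 | hV₂pos
  · have hV₁V : V₁ = V := by rw [← hsum, ← hV₂0, add_zero]
    rw [hV₁V]
    exact le_self_add
  -- degenerate cases
  rcases eq_or_ne (isoProfile μ V₁) ⊤ with h1 | h1
  · rw [h1, top_add]; exact le_top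
  rcases eq_or_ne (isoProfileAtInfty μ V₂) ⊤ with h2 | h2
  · rw [h2, add_top]; exact le_top
  -- `X` is nonempty
  rcases isEmpty_or_nonempty X with hXe | hXn
  · exfalso
    have h0 : μ (Set.univ : Set X) = 0 := by
      rw [Set.univ_eq_empty_iff.2 hXe, measure_empty]
    have hVlt := hV.2
    rw [h0] at hVlt
    exact absurd hVlt (by simp)
  obtain ⟨o⟩ := hXn
  refine ENNReal.le_of_forall_pos_le_add fun ε₀ hε₀ _ => ?_
  set δ : ℝ≥0∞ := ((ε₀ / 3 : ℝ≥0) : ℝ≥0∞) with hδ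
  have hε₀3 : (0 : ℝ≥0) < ε₀ / 3 := by positivity
  have hδ0 : δ ≠ 0 := by
    rw [hδ]; exact_mod_cast hε₀3.ne'
  set εr : ℝ := ((ε₀ / 3 : ℝ≥0) : ℝ) with hεrdef
  have hεrpos : 0 < εr := by rw [hεrdef]; exact_mod_cast hε₀3
  have hδr : ENNReal.ofReal εr = δ := by
    rw [hεrdef, hδ]; exact ENNReal.ofReal_coe_nnreal
  -- extract a near-optimal competitor `E` for `I(V₁)`
  set c₁ := isoProfile μ V₁ + δ with hc₁
  have hc₁top : c₁ ≠ ⊤ := by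
    rw [hc₁]; exact ENNReal.add_ne_top.2 ⟨h1, ENNReal.coe_ne_top⟩
  have hEex : isoProfile μ V₁ < c₁ := ENNReal.lt_add_right h1 hδ0
  rw [isoProfile, iInf_lt_iff] at hEex
  obtain ⟨E, hEex⟩ := hEex
  rw [iInf_lt_iff] at hEex
  obtain ⟨hEm, hEex⟩ := hEex
  rw [iInf_lt_iff] at hEex
  obtain ⟨hEv, hEper⟩ := hEex
  -- extract a near-optimal escaping sequence `F` for `I^∞(V₂)`
  set c₂ := isoProfileAtInfty μ V₂ + δ with hc₂
  have hFex : isoProfileAtInfty μ V₂ < c₂ := ENNReal.lt_add_right h2 hδ0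
  rw [isoProfileAtInfty, iInf_lt_iff] at hFex
  obtain ⟨F, hFex⟩ := hFex
  rw [iInf_lt_iff] at hFex
  obtain ⟨hFm, hFex⟩ := hFex
  rw [iInf_lt_iff] at hFex
  obtain ⟨hFv, hFex⟩ := hFex
  rw [iInf_lt_iff] at hFex
  obtain ⟨hFesc, hFlim⟩ := hFex
  -- subsequence along which the perimeters of `F` converge
  obtain ⟨ψ, hψm, hψt⟩ := aux_exists_subseq_tendsto_liminf (fun i => Perim μ (F i))
  set B₀ := Filter.liminf (fun i => Perim μ (F i)) atTop with hB₀def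
  have hB₀ : B₀ < c₂ := hFlim
  -- basic finiteness
  have hPEtop : Perim μ E ≠ ⊤ := (hEper.trans hc₁top.lt_top).ne
  have hμEtop : μ E ≠ ⊤ := by rw [hEv]; exact ENNReal.ofReal_ne_top
  -- the cut property and the monotone volume function
  have hcutE := hcut E hEm hPEtop o
  set m : ℝ → ℝ := fun s => (μ (E ∩ ball o s)).toReal with hm_def
  have hmono : Monotone m := by
    intro s t hst
    apply ENNReal.toReal_mono
    · exact ne_top_of_le_ne_top hμEtop (measure_mono inter_subset_left)
    · exact measure_mono (inter_subset_inter_right E (ball_subset_ball hst))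
  have hmC : ∀ s : ℝ, m s ≤ V₁ := by
    intro s
    have hle : μ (E ∩ ball o s) ≤ ENNReal.ofReal V₁ :=
      hEv ▸ measure_mono inter_subset_left
    calc m s ≤ (ENNReal.ofReal V₁).toReal :=
        ENNReal.toReal_mono ENNReal.ofReal_ne_top hle
      _ = V₁ := ENNReal.toReal_ofReal hV₁
  have hm0 : ∀ s : ℝ, 0 ≤ m s := fun s => ENNReal.toReal_nonneg
  set S : Set ℝ := {s : ℝ | Perim μ (E ∩ ball o s) ≤
      perim μ E (ball o s) + ENNReal.ofReal (deriv m s)} with hSdef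
  have hSae : ∀ᵐ s ∂(volume.restrict (Set.Ioi (0 : ℝ))), s ∈ S :=
    hcutE.mono fun s hs => hs.1
  -- choose good radii
  have hradii : ∀ n : ℕ, ∃ s : ℝ, (n : ℝ) < s ∧ s ∈ S ∧ deriv m s ≤ εr :=
    fun n => aux_exists_good_radius hmono hmC hm0 hSae hεrpos n
  choose r hr1 hr2 hr3 using hradii
  -- measure facts about the truncations
  have hGsub : ∀ n : ℕ, μ (E ∩ ball o (r n)) ≤ ENNReal.ofReal V₁ :=
    fun n => hEv ▸ measure_mono inter_subset_left
  have hGtop : ∀ n : ℕ, μ (E ∩ ball o (r n)) ≠ ⊤ :=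
    fun n => ne_top_of_le_ne_top ENNReal.ofReal_ne_top (hGsub n)
  have hGm : ∀ n : ℕ, MeasurableSet (E ∩ ball o (r n)) :=
    fun n => hEm.inter measurableSet_ball
  have hGper : ∀ n : ℕ, Perim μ (E ∩ ball o (r n)) ≤ Perim μ E + δ := by
    intro n
    have h := hr2 n
    rw [hSdef] at h
    refine le_trans h (add_le_add (aux_perim_le_Perim μ E _) ?_)
    calc ENNReal.ofReal (deriv m (r n)) ≤ ENNReal.ofReal εr :=
        ENNReal.ofReal_le_ofReal (hr3 n)
      _ = δ := hδr
  have hGv : Tendsto (fun n : ℕ => μ (E ∩ ball o (r n))) atTop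
      (𝓝 (ENNReal.ofReal V₁)) := by
    have hunion : (⋃ n : ℕ, (E ∩ ball o (n : ℝ))) = E := by
      ext x
      simp only [Set.mem_iUnion, Set.mem_inter_iff, Metric.mem_ball]
      constructor
      · rintro ⟨n, hn, -⟩; exact hn
      · intro hx
        obtain ⟨n, hn⟩ := exists_nat_gt (dist x o)
        exact ⟨n, hx, hn⟩
    have hmonoseq : Monotone fun n : ℕ => E ∩ ball o (n : ℝ) := by
      intro a b hab
      exact inter_subset_inter_right E (ball_subset_ball (by exact_mod_cast hab))
    have hlower : Tendsto (fun n : ℕ => μ (E ∩ ball o (n : ℝ))) atTop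
        (𝓝 (ENNReal.ofReal V₁)) := by
      have h := tendsto_measure_iUnion_atTop (μ := μ) hmonoseq
      rwa [hunion, hEv] at h
    refine tendsto_of_tendsto_of_tendsto_of_le_of_le hlower tendsto_const_nhds
      (fun n => ?_) (fun n => hGsub n)
    exact measure_mono (inter_subset_inter_right E (ball_subset_ball (hr1 n).le))
  -- the limit volumes are admissible
  have hofm : ∀ n : ℕ, ENNReal.ofReal (m (r n)) = μ (E ∩ ball o (r n)) := by
    intro n
    rw [hm_def]
    exact ENNReal.ofReal_toReal (hGtop n)
  have hdom : ∀ n : ℕ, m (r n) + V₂ ∈ profileDomain μ := by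
    intro n
    constructor
    · have := hm0 (r n); linarith
    · have heq : ENNReal.ofReal (m (r n) + V₂)
          = μ (E ∩ ball o (r n)) + ENNReal.ofReal V₂ := by
        rw [ENNReal.ofReal_add (hm0 (r n)) hV₂, hofm n]
      rw [heq]
      calc μ (E ∩ ball o (r n)) + ENNReal.ofReal V₂
          ≤ ENNReal.ofReal V₁ + ENNReal.ofReal V₂ := add_le_add_left (hGsub n) _
        _ = ENNReal.ofReal V := by rw [← ENNReal.ofReal_add hV₁ hV₂, hsum]
        _ < μ Set.univ := hV.2
  -- inner estimate for each fixed truncation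
  have hinner : ∀ n : ℕ, isoProfile μ (m (r n) + V₂)
      ≤ Perim μ (E ∩ ball o (r n)) + B₀ := by
    intro n
    have hrpos : (0 : ℝ) < r n := lt_of_le_of_lt (Nat.cast_nonneg n) (hr1 n)
    have hdisj : ∀ᶠ i in atTop, Disjoint (E ∩ ball o (r n)) (F (ψ i)) := by
      filter_upwards [hψm.tendsto_atTop.eventually (hFesc o (r n) hrpos)] with i hi
      rw [Set.disjoint_left]
      intro x hxG hxF
      have hmem : x ∈ F (ψ i) ∩ ball o (r n) := ⟨hxF, hxG.2⟩
      rw [hi] at hmem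
      exact hmem
    set L : ℝ≥0∞ := μ (E ∩ ball o (r n)) + ENNReal.ofReal V₂ with hLdef
    have hLtop : L ≠ ⊤ := ENNReal.add_ne_top.2 ⟨hGtop n, ENNReal.ofReal_ne_top⟩
    have hL0 : 0 < L :=
      lt_of_lt_of_le (ENNReal.ofReal_pos.2 hV₂pos) le_add_self
    have hLU : L < μ Set.univ := by
      calc L ≤ ENNReal.ofReal V₁ + ENNReal.ofReal V₂ := add_le_add_left (hGsub n) _
        _ = ENNReal.ofReal V := by rw [← ENNReal.ofReal_add hV₁ hV₂, hsum]
        _ < μ Set.univ := hV.2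
    have hHv : Tendsto (fun i => μ ((E ∩ ball o (r n)) ∪ F (ψ i))) atTop (𝓝 L) := by
      have hconv : Tendsto (fun i => μ (E ∩ ball o (r n)) + μ (F (ψ i))) atTop (𝓝 L) := by
        rw [hLdef]
        exact (hFv.comp hψm.tendsto_atTop).const_add _
      refine Tendsto.congr' ?_ hconv
      filter_upwards [hdisj] with i hi
      exact (measure_union hi (hFm (ψ i))).symm
    have hev1 : ∀ᶠ i in atTop, μ ((E ∩ ball o (r n)) ∪ F (ψ i)) < ⊤ :=
      hHv.eventually_lt_const hLtop.lt_top
    have hev2 : ∀ᶠ i in atTop, 0 < μ ((E ∩ ball o (r n)) ∪ F (ψ i)) :=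
      hHv.eventually_const_lt hL0
    have hev3 : ∀ᶠ i in atTop, μ ((E ∩ ball o (r n)) ∪ F (ψ i)) < μ Set.univ :=
      hHv.eventually_lt_const hLU
    have hWdom : ∀ᶠ i in atTop,
        (μ ((E ∩ ball o (r n)) ∪ F (ψ i))).toReal ∈ profileDomain μ := by
      filter_upwards [hev1, hev2, hev3] with i ha hb hc
      refine ⟨ENNReal.toReal_pos hb.ne' ha.ne, ?_⟩
      rwa [ENNReal.ofReal_toReal ha.ne]
    have hWt : Tendsto (fun i => (μ ((E ∩ ball o (r n)) ∪ F (ψ i))).toReal) atTop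
        (𝓝 (m (r n) + V₂)) := by
      have h1 := (ENNReal.tendsto_toReal hLtop).comp hHv
      have h2 : L.toReal = m (r n) + V₂ := by
        rw [hLdef, ENNReal.toReal_add (hGtop n) ENNReal.ofReal_ne_top,
          ENNReal.toReal_ofReal hV₂, hm_def]
      rwa [h2] at h1
    have hIW : ∀ᶠ i in atTop,
        isoProfile μ ((μ ((E ∩ ball o (r n)) ∪ F (ψ i))).toReal)
          ≤ Perim μ ((E ∩ ball o (r n)) ∪ F (ψ i)) := by
      filter_upwards [hev1] with i ha
      rw [isoProfile]
      exact iInf_le_of_le ((E ∩ ball o (r n)) ∪ F (ψ i))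
        (iInf_le_of_le ((hGm n).union (hFm (ψ i)))
          (iInf_le_of_le (by rw [ENNReal.ofReal_toReal ha.ne]) le_rfl))
    have hPerH : ∀ᶠ i in atTop,
        Perim μ ((E ∩ ball o (r n)) ∪ F (ψ i))
          ≤ Perim μ (E ∩ ball o (r n)) + Perim μ (F (ψ i)) := by
      filter_upwards [hdisj] with i hi
      exact aux_Perim_union_le μ (hGm n) (hFm (ψ i)) hi
    calc isoProfile μ (m (r n) + V₂)
        ≤ Filter.liminf
            (fun i => isoProfile μ ((μ ((E ∩ ball o (r n)) ∪ F (ψ i))).toReal))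
            atTop := aux_lsc_liminf hlsc (hdom n) hWdom hWt
      _ ≤ Filter.liminf (fun i => Perim μ ((E ∩ ball o (r n)) ∪ F (ψ i))) atTop :=
          Filter.liminf_le_liminf hIW
      _ ≤ Filter.liminf
            (fun i => Perim μ (E ∩ ball o (r n)) + Perim μ (F (ψ i))) atTop :=
          Filter.liminf_le_liminf hPerH
      _ = Perim μ (E ∩ ball o (r n)) + B₀ := (hψt.const_add _).liminf_eq
  -- outer limit
  have hW't : Tendsto (fun n : ℕ => m (r n) + V₂) atTop (𝓝 V) := by
    have h1 := (ENNReal.tendsto_toReal ENNReal.ofReal_ne_top).comp hGv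
    rw [ENNReal.toReal_ofReal hV₁] at h1
    have h2 : Tendsto (fun n : ℕ => m (r n)) atTop (𝓝 V₁) := h1
    have h3 := h2.add_const V₂
    rwa [hsum] at h3
  calc isoProfile μ V
      ≤ Filter.liminf (fun n => isoProfile μ (m (r n) + V₂)) atTop :=
        aux_lsc_liminf hlsc hV (Filter.Eventually.of_forall hdom) hW't
    _ ≤ Filter.liminf (fun n => Perim μ (E ∩ ball o (r n)) + B₀) atTop :=
        Filter.liminf_le_liminf (Filter.Eventually.of_forall hinner)
    _ ≤ Filter.liminf (fun _ => (Perim μ E + δ) + B₀) atTop :=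
        Filter.liminf_le_liminf
          (Filter.Eventually.of_forall fun n => add_le_add_left (hGper n) _)
    _ = (Perim μ E + δ) + B₀ := Filter.liminf_const _
    _ ≤ ((isoProfile μ V₁ + δ) + δ) + (isoProfileAtInfty μ V₂ + δ) := by
        refine add_le_add (add_le_add_left ?_ _) ?_
        · rw [← hc₁]; exact hEper.le
        · rw [← hc₂]; exact hB₀.le
    _ = (isoProfile μ V₁ + isoProfileAtInfty μ V₂) + (δ + δ + δ) := by ring
    _ = isoProfile μ V₁ + isoProfileAtInfty μ V₂ + (ε₀ : ℝ≥0∞) := by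
        congr 1
        rw [hδ, ← ENNReal.coe_add, ← ENNReal.coe_add]
        congr 1
        apply NNReal.coe_injective
        push_cast
        ring

end
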